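/- arXiv:1108.2932 — 3 statements merged into one kernel-verified Lean document; each statement's English description precedes it below -/
import Mathlib

section
/- Let F be a field of characteristic 2. An element x of sl(2, F) is split semisimple if and only if x is a scalar multiple of the identity matrix. That is, {x ∈ sl(2,F) : ⨆_{μ∈F} ker(ad x − μ·id) = sl(2,F)} = F·1. (Note that the identity matrix has trace 2 = 0, so it lies in sl(2,F) when char F = 2.) -/
/-- An element `h` of a Lie algebra `L` over `F` is *split semisimple* if `L` is spanned by
eigenvectors of `ad h`, i.e. the supremum of the eigenspaces `ker (ad h - μ • id)` over all
`μ ∈ F` is the whole of `L`. -/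
def IsSplitSemisimple (F : Type*) [Field F] (L : Type*) [LieRing L] [LieAlgebra F L]
    (h : L) : Prop :=
  (⨆ μ : F, LinearMap.ker (LieAlgebra.ad F L h - μ • (1 : Module.End F L))) = ⊤

/-- For a trace-zero `2 × 2` matrix `x` over a field of characteristic `2`, the square of
`ad x` vanishes: `⁅x, ⁅x, y⁆⁆ = 0` for all `y`. -/
theorem key_lemma_sl2_char_two {F : Type*} [Field F] [CharP F 2]
    (x y : Matrix (Fin 2) (Fin 2) F) (hx : x.trace = 0) : ⁅x, ⁅x, y⁆⁆ = 0 := by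
  have h2 : (2 : F) = 0 := by exact_mod_cast CharP.cast_eq_zero F 2
  have hsq : x * x = x.det • (1 : Matrix (Fin 2) (Fin 2) F) := by
    rw [Matrix.trace_fin_two] at hx
    ext i j
    fin_cases i <;> fin_cases j <;>
      simp [Matrix.mul_apply, Fin.sum_univ_two, Matrix.det_fin_two, Matrix.one_apply]
    · linear_combination (x 0 0 ^ 2 + x 0 1 * x 1 0) * h2 - x 0 0 * hx
    · linear_combination x 0 1 * hx
    · linear_combination x 1 0 * hx
    · linear_combination (x 1 1 ^ 2 + x 0 1 * x 1 0) * h2 - x 1 1 * hx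
  have : ⁅x, ⁅x, y⁆⁆ = (x * x) * y + y * (x * x) - (x * y * x + x * y * x) := by
    simp only [Ring.lie_def]; noncomm_ring
  rw [this, hsq, ← two_smul F (x * y * x), h2, zero_smul, sub_zero,
    Matrix.smul_mul, Matrix.mul_smul, one_mul, mul_one, ← two_smul F, h2, zero_smul]

attribute [local instance 100] LieRing.ofAssociativeRing

open LieAlgebra.SpecialLinear in
/-- Over a field of characteristic `2`, an element of `sl(2, F)` is split semisimple if and only
if it is a scalar multiple of the identity matrix. -/
theorem isSplitSemisimple_sl2_iff_scalar (F : Type*) [Field F] [CharP F 2] :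
    {x : ↥(sl (Fin 2) F) | IsSplitSemisimple F ↥(sl (Fin 2) F) x} =
      {x : ↥(sl (Fin 2) F) | ∃ c : F, (x : Matrix (Fin 2) (Fin 2) F) = c • (1 : Matrix (Fin 2) (Fin 2) F)} := by
  ext x
  simp only [Set.mem_setOf_eq]
  constructor
  · intro h
    have htr : (x : Matrix (Fin 2) (Fin 2) F).trace = 0 := x.2
    have had2 : ∀ y : ↥(sl (Fin 2) F),
        (LieAlgebra.ad F ↥(sl (Fin 2) F) x) ((LieAlgebra.ad F ↥(sl (Fin 2) F) x) y) = 0 := by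
      intro y
      apply Subtype.ext
      show (⁅x, ⁅x, y⁆⁆ : ↥(sl (Fin 2) F)).val = 0
      rw [LieSubalgebra.coe_bracket, LieSubalgebra.coe_bracket]
      exact key_lemma_sl2_char_two _ _ htr
    have hker : LinearMap.ker (LieAlgebra.ad F ↥(sl (Fin 2) F) x) = ⊤ := by
      rw [← top_le_iff, ← h]
      apply iSup_le
      intro μ
      by_cases hμ : μ = 0
      · subst hμ
        simp
      · intro v hv
        rw [LinearMap.mem_ker, LinearMap.sub_apply, LinearMap.smul_apply,
          Module.End.one_apply, sub_eq_zero] at hv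
        have h0 : (0 : ↥(sl (Fin 2) F)) = μ • (μ • v) := by
          rw [← had2 v, hv, _root_.map_smul, hv]
        have hv0 : v = 0 := by
          have := h0.symm
          rwa [smul_smul, smul_eq_zero, or_iff_right (mul_ne_zero hμ hμ)] at this
        simp [hv0]
    have hcomm : ∀ y : ↥(sl (Fin 2) F),
        ⁅(x : Matrix (Fin 2) (Fin 2) F), (y : Matrix (Fin 2) (Fin 2) F)⁆ = 0 := by
      intro y
      have hy : y ∈ LinearMap.ker (LieAlgebra.ad F ↥(sl (Fin 2) F) x) := hker ▸ Submodule.mem_top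
      have : ⁅x, y⁆ = (0 : ↥(sl (Fin 2) F)) := by simpa using hy
      have := congrArg Subtype.val this
      rwa [LieSubalgebra.coe_bracket] at this
    have he' : ⁅(x : Matrix (Fin 2) (Fin 2) F),
        Matrix.single (0 : Fin 2) (1 : Fin 2) (1 : F)⁆ = 0 := by
      simpa using hcomm (LieAlgebra.SpecialLinear.single (0 : Fin 2) (1 : Fin 2) (by decide) (1 : F))
    have hf' : ⁅(x : Matrix (Fin 2) (Fin 2) F),
        Matrix.single (1 : Fin 2) (0 : Fin 2) (1 : F)⁆ = 0 := by
      simpa using hcomm (LieAlgebra.SpecialLinear.single (1 : Fin 2) (0 : Fin 2) (by decide) (1 : F))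
    have e11 : (x : Matrix (Fin 2) (Fin 2) F) 1 0 = 0 := by
      have := congrFun (congrFun he' 1) 1
      simpa [Ring.lie_def, Matrix.mul_apply, Fin.sum_univ_two, Matrix.single,
        Matrix.sub_apply] using this
    have e01 : (x : Matrix (Fin 2) (Fin 2) F) 0 0 = (x : Matrix (Fin 2) (Fin 2) F) 1 1 := by
      have := congrFun (congrFun he' 0) 1
      simp [Ring.lie_def, Matrix.mul_apply, Fin.sum_univ_two, Matrix.single,
        Matrix.sub_apply, sub_eq_zero] at this
      exact this
    have f01 : (x : Matrix (Fin 2) (Fin 2) F) 0 1 = 0 := by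
      have := congrFun (congrFun hf' 0) 0
      simpa [Ring.lie_def, Matrix.mul_apply, Fin.sum_univ_two, Matrix.single,
        Matrix.sub_apply] using this
    refine ⟨(x : Matrix (Fin 2) (Fin 2) F) 0 0, ?_⟩
    ext i j
    fin_cases i <;> fin_cases j <;> simp [Matrix.one_apply, e11, f01, ← e01]
  · rintro ⟨c, hc⟩
    have had : LieAlgebra.ad F ↥(sl (Fin 2) F) x = 0 := by
      apply LinearMap.ext
      intro y
      apply Subtype.ext
      show (⁅x, y⁆ : ↥(sl (Fin 2) F)).val = 0
      rw [LieSubalgebra.coe_bracket, hc, Ring.lie_def, Matrix.smul_mul, Matrix.mul_smul,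
        one_mul, mul_one, sub_self]
    unfold IsSplitSemisimple
    apply top_unique
    refine le_trans ?_ (le_iSup _ (0 : F))
    rw [had, zero_smul, sub_zero, LinearMap.ker_zero]
end

section
/- Let F be a field of characteristic 2. There is no element x ∈ sl(2, F) whose centralizer C(x) = {y ∈ sl(2,F) : [x,y] = 0} is an abelian Lie subalgebra consisting of split semisimple elements that is maximal (with respect to inclusion) among all such subalgebras. In other words, the Lie algebra of type A1^SC over a field of characteristic 2 has no regular split semisimple elements. -/
open LieAlgebra.SpecialLinear in
/-- In characteristic `2`, any commutator in `sl(2, F)` is a scalar multiple of the identity. -/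
lemma sl2_char_two_bracket_scalar (F : Type*) [Field F] [CharP F 2] (x y : ↥(sl (Fin 2) F)) :
    x.val * y.val - y.val * x.val
      = (x.val 0 1 * y.val 1 0 - x.val 1 0 * y.val 0 1) • (1 : Matrix (Fin 2) (Fin 2) F) := by
  have h2 : (2 : F) = 0 := by exact_mod_cast CharP.cast_eq_zero F 2
  have hx : x.val 0 0 + x.val 1 1 = 0 := by
    have hx' : Matrix.trace x.val = 0 := x.2
    simpa [Matrix.trace, Fin.sum_univ_two] using hx'
  have hy : y.val 0 0 + y.val 1 1 = 0 := by
    have hy' : Matrix.trace y.val = 0 := y.2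
    simpa [Matrix.trace, Fin.sum_univ_two] using hy'
  ext i j
  fin_cases i <;> fin_cases j
  · simp [Matrix.mul_apply, Matrix.one_apply, Fin.sum_univ_two]; ring
  · simp [Matrix.mul_apply, Matrix.one_apply, Fin.sum_univ_two]
    linear_combination y.val 0 1 * hx + x.val 0 1 * hy -
        (y.val 0 1 * x.val 1 1 + x.val 0 1 * y.val 0 0) * h2
  · simp [Matrix.mul_apply, Matrix.one_apply, Fin.sum_univ_two]
    linear_combination y.val 1 0 * hx + x.val 1 0 * hy -
        (x.val 1 0 * y.val 1 1 + y.val 1 0 * x.val 0 0) * h2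
  · simp [Matrix.mul_apply, Matrix.one_apply, Fin.sum_univ_two]
    linear_combination (x.val 1 0 * y.val 0 1 - y.val 1 0 * x.val 0 1) * h2

open LieAlgebra.SpecialLinear in
/-- In characteristic `2`, `(ad x)^2 = 0` on `sl(2, F)`. -/
lemma sl2_char_two_sq_zero (F : Type*) [Field F] [CharP F 2]
    (x y : ↥(sl (Fin 2) F)) : ⁅x, ⁅x, y⁆⁆ = 0 := by
  apply Subtype.ext
  show x.val * (⁅x, y⁆ : ↥(sl (Fin 2) F)).val - (⁅x, y⁆ : ↥(sl (Fin 2) F)).val * x.val = 0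
  have h : (⁅x, y⁆ : ↥(sl (Fin 2) F)).val = x.val * y.val - y.val * x.val := rfl
  rw [h, sl2_char_two_bracket_scalar, Matrix.mul_smul, Matrix.smul_mul, mul_one, one_mul,
    sub_self]

open LieAlgebra.SpecialLinear in
/-- In characteristic `2`, a split semisimple element of `sl(2, F)` is central. -/
lemma sl2_char_two_splitss_central (F : Type*) [Field F] [CharP F 2]
    (x : ↥(sl (Fin 2) F)) (hx : IsSplitSemisimple F ↥(sl (Fin 2) F) x)
    (y : ↥(sl (Fin 2) F)) : ⁅x, y⁆ = 0 := by
  have hker : (⨆ μ : F, LinearMap.ker (LieAlgebra.ad F ↥(sl (Fin 2) F) x -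
      μ • (1 : Module.End F ↥(sl (Fin 2) F)))) ≤
      LinearMap.ker (LieAlgebra.ad F ↥(sl (Fin 2) F) x) := by
    apply iSup_le
    intro μ v hv
    rw [LinearMap.mem_ker] at hv ⊢
    have hv' : ⁅x, v⁆ = μ • v := by
      have := sub_eq_zero.mp (by simpa using hv)
      simpa [LieAlgebra.ad_apply] using this
    rcases eq_or_ne μ 0 with h0 | h0
    · simp [LieAlgebra.ad_apply, hv', h0]
    · have hsq : ⁅x, ⁅x, v⁆⁆ = 0 := sl2_char_two_sq_zero F x v
      rw [hv', lie_smul, hv', smul_smul] at hsq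
      have hv0 : v = 0 := by
        have := smul_eq_zero.mp hsq
        rcases this with h | h
        · exact absurd h (mul_ne_zero h0 h0)
        · exact h
      simp [LieAlgebra.ad_apply, hv0]
  have : LinearMap.ker (LieAlgebra.ad F ↥(sl (Fin 2) F) x) = ⊤ :=
    top_le_iff.mp (hx ▸ hker)
  have hy : y ∈ LinearMap.ker (LieAlgebra.ad F ↥(sl (Fin 2) F) x) := this ▸ Submodule.mem_top
  simpa [LieAlgebra.ad_apply] using hy

open LieAlgebra.SpecialLinear in
/-- Over a field of characteristic `2`, there is no element `x` of `sl(2, F)` whose centralizer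
`{y : ⁅x, y⁆ = 0}` is a maximal split toral subalgebra, i.e. an abelian Lie subalgebra consisting
of split semisimple elements that is maximal with respect to inclusion among all such
subalgebras.  In other words, `sl(2, F)` has no regular split semisimple elements. -/
theorem sl2_char_two_no_regular_split_semisimple (F : Type*) [Field F] [CharP F 2] :
    ¬ ∃ (x : ↥(sl (Fin 2) F)) (H : LieSubalgebra F ↥(sl (Fin 2) F)),
        (↑H : Set ↥(sl (Fin 2) F)) = {y : ↥(sl (Fin 2) F) | ⁅x, y⁆ = 0} ∧
        IsLieAbelian ↥H ∧
        (∀ z : ↥(sl (Fin 2) F), z ∈ H → IsSplitSemisimple F ↥(sl (Fin 2) F) z) ∧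
        (∀ H' : LieSubalgebra F ↥(sl (Fin 2) F),
            IsLieAbelian ↥H' →
            (∀ z : ↥(sl (Fin 2) F), z ∈ H' → IsSplitSemisimple F ↥(sl (Fin 2) F) z) →
            H ≤ H' → H' = H) := by
  rintro ⟨x, H, hH, hab, hss, -⟩
  -- `x ∈ H` since `⁅x, x⁆ = 0`.
  have hxH : x ∈ H := by
    have : x ∈ (↑H : Set ↥(sl (Fin 2) F)) := by rw [hH]; simp
    exact this
  -- Hence `x` is split semisimple, so central, so `H` is everything.
  have hcentral := sl2_char_two_splitss_central F x (hss x hxH)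
  have hmem : ∀ y : ↥(sl (Fin 2) F), y ∈ H := by
    intro y
    have : y ∈ (↑H : Set ↥(sl (Fin 2) F)) := by rw [hH]; exact hcentral y
    exact this
  -- But `sl(2, F)` is not abelian: `⁅e, f⁆ ≠ 0`.
  set e : ↥(sl (Fin 2) F) := LieAlgebra.SpecialLinear.single (0 : Fin 2) 1 (by decide) (1 : F) with he
  set f : ↥(sl (Fin 2) F) := LieAlgebra.SpecialLinear.single (1 : Fin 2) 0 (by decide) (1 : F) with hf
  have hbrkt : ⁅(⟨e, hmem e⟩ : H), (⟨f, hmem f⟩ : H)⁆ = 0 := trivial_lie_zero _ _ _ _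
  have hbrkt' : ⁅e, f⁆ = (0 : ↥(sl (Fin 2) F)) := by
    have := congrArg (Subtype.val) hbrkt
    exact Subtype.ext (congrArg Subtype.val this)
  have hval : e.val * f.val - f.val * e.val = 0 := by
    have := congrArg Subtype.val hbrkt'
    simpa [sl_bracket, Ring.lie_def] using this
  have h00 := congrFun (congrFun hval 0) 0
  simp [he, hf, Matrix.mul_apply, Matrix.single_apply_same,
    Matrix.single, Fin.sum_univ_two] at h00
end

section
/- Let F be a field of characteristic 2. Then the Lie algebra sl(2, F) is not isomorphic to the quotient Lie algebra gl(2, F)/Z, where Z = F·1 is the central ideal of scalar matrices. (These are the Chevalley Lie algebras of type A1^SC and A1^ad, respectively, which are isomorphic in every characteristic except 2.) -/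
attribute [local instance 100] LieRing.ofAssociativeRing

/-- The scalar matrices `F · 1` form a central ideal `Z` of `gl(2, F)`. -/
def scalarIdeal (F : Type*) [Field F] : LieIdeal F (Matrix (Fin 2) (Fin 2) F) :=
  { Submodule.span F {(1 : Matrix (Fin 2) (Fin 2) F)} with
    lie_mem := by
      intro x m hm
      have hm' : m ∈ Submodule.span F {(1 : Matrix (Fin 2) (Fin 2) F)} := hm
      obtain ⟨c, rfl⟩ := Submodule.mem_span_singleton.mp hm'
      show ⁅x, c • (1 : Matrix (Fin 2) (Fin 2) F)⁆ ∈
        Submodule.span F {(1 : Matrix (Fin 2) (Fin 2) F)}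
      have h0 : ⁅x, c • (1 : Matrix (Fin 2) (Fin 2) F)⁆ = 0 := by
        simp [Ring.lie_def, Matrix.mul_smul, Matrix.smul_mul]
      rw [h0]
      exact Submodule.zero_mem _ }

open LieAlgebra.SpecialLinear in
/-- Over a field of characteristic `2`, the Lie algebra `sl(2, F)` is not isomorphic to the
quotient Lie algebra `gl(2, F) / Z`, where `Z = F · 1` is the central ideal of scalar matrices.
(These are the Chevalley Lie algebras of types `A1^SC` and `A1^ad` respectively, which are
isomorphic in every characteristic except `2`.) -/
theorem sl2_not_iso_pgl2_char_two (F : Type*) [Field F] [CharP F 2] :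
    IsEmpty (↥(sl (Fin 2) F) ≃ₗ⁅F⁆ (Matrix (Fin 2) (Fin 2) F ⧸ scalarIdeal F)) := by
  constructor
  intro φ
  -- the identity matrix lies in sl₂ since its trace is 2 = 0
  have htr : (1 : Matrix (Fin 2) (Fin 2) F) ∈ sl (Fin 2) F := by
    show (1 : Matrix (Fin 2) (Fin 2) F) ∈ LinearMap.ker (Matrix.traceLinearMap (Fin 2) F F)
    rw [LinearMap.mem_ker]
    simp [Matrix.trace_one]
    exact CharTwo.two_eq_zero
  set z : sl (Fin 2) F := ⟨1, htr⟩ with hz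
  have hzne : z ≠ 0 := by
    intro h
    have : (1 : Matrix (Fin 2) (Fin 2) F) = 0 := congrArg Subtype.val h
    exact one_ne_zero this
  -- z is central in sl₂
  have hcent : ∀ x : sl (Fin 2) F, ⁅z, x⁆ = 0 := by
    intro x
    apply Subtype.ext
    rw [sl_bracket]
    show (1 : Matrix (Fin 2) (Fin 2) F) * x.val - x.val * 1 = 0
    simp
  -- hence φ z is central in the quotient
  have hφcent : ∀ w : Matrix (Fin 2) (Fin 2) F ⧸ scalarIdeal F, ⁅φ z, w⁆ = 0 := by
    intro w
    obtain ⟨x, rfl⟩ := φ.surjective w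
    rw [show (φ z : Matrix (Fin 2) (Fin 2) F ⧸ scalarIdeal F) = φ.toLieHom z from rfl,
      ← LieHom.map_lie, hcent, map_zero]
  -- write φ z as mk m
  obtain ⟨m, hm⟩ := LieSubmodule.Quotient.surjective_mk' (N := scalarIdeal F) (φ z)
  have key : ∀ x : Matrix (Fin 2) (Fin 2) F,
      ⁅m, x⁆ ∈ Submodule.span F {(1 : Matrix (Fin 2) (Fin 2) F)} := by
    intro x
    have h := hφcent (LieSubmodule.Quotient.mk' (scalarIdeal F) x)
    rw [← hm] at h
    have h' : LieSubmodule.Quotient.mk' (scalarIdeal F) ⁅m, x⁆ = 0 := by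
      rw [LieSubmodule.Quotient.mk'_apply, LieSubmodule.Quotient.mk_bracket]
      exact h
    exact (LieSubmodule.Quotient.mk_eq_zero _).mp h'
  -- evaluate the centrality conditions at elementary matrices
  obtain ⟨c1, hc1⟩ := Submodule.mem_span_singleton.mp (key !![1,0;0,0])
  obtain ⟨c2, hc2⟩ := Submodule.mem_span_singleton.mp (key !![0,1;0,0])
  rw [Ring.lie_def] at hc1 hc2
  have e01 : m 0 1 = 0 := by
    have := congrFun (congrFun hc1 0) 1
    simp [Matrix.mul_apply, Fin.sum_univ_two, Matrix.one_apply, Matrix.vecMul, Matrix.vecHead, Matrix.vecTail, dotProduct] at this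
    exact this
  have e10 : m 1 0 = 0 := by
    have := congrFun (congrFun hc1 1) 0
    simp [Matrix.mul_apply, Fin.sum_univ_two, Matrix.one_apply, Matrix.vecMul, Matrix.vecHead, Matrix.vecTail, dotProduct] at this
    exact this.symm
  have e00 : m 0 0 = m 1 1 := by
    have := congrFun (congrFun hc2 0) 1
    simp [Matrix.mul_apply, Fin.sum_univ_two, Matrix.one_apply, Matrix.vecMul, Matrix.vecHead, Matrix.vecTail, dotProduct] at this
    exact sub_eq_zero.mp this.symm
  -- hence m is scalar
  have hms : m = m 0 0 • (1 : Matrix (Fin 2) (Fin 2) F) := by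
    ext i j
    fin_cases i <;> fin_cases j <;>
      simp [Matrix.one_apply, e01, e10, e00]
  have hmem : m ∈ scalarIdeal F :=
    Submodule.mem_span_singleton.mpr ⟨m 0 0, hms.symm⟩
  have hz0 : φ z = 0 := by
    rw [← hm]
    exact (LieSubmodule.Quotient.mk_eq_zero _).mpr hmem
  have h00 : φ 0 = 0 := φ.toLieHom.map_zero
  exact hzne (φ.injective (hz0.trans h00.symm))
end
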